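/- Let S be a monoid with identity λ acting on a meet-semilattice E by endomorphisms, and suppose E has a greatest element 1. Then the semidirect product E ⋊ S is an F-restriction semigroup in which m((e,s)) = (1,s) for every (e,s) ∈ E ⋊ S, and its maximum projection — which is its unique left identity — is the element (1, λ). -/
import Mathlib


/-- `e` is a projection: an element of the form `a⁺`. -/
def IsProjection {R : Type*} (plus : R → R) (e : R) : Prop := ∃ a, e = plus a

/-- The natural partial order: `s ≤ t` iff `s = s⁺·t`. -/
def NatLe {R : Type*} (mul : R → R → R) (plus : R → R) (s t : R) : Prop :=
  s = mul (plus s) t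

/-- The relation σ: `s σ t` iff `e·s = e·t` for some projection `e`. -/
def SigmaRel {R : Type*} (mul : R → R → R) (plus : R → R) (s t : R) : Prop :=
  ∃ e, IsProjection plus e ∧ mul e s = mul e t

/-- Multiplication of the semidirect product `E ⋊ S`:
`(e,s)(f,t) = (e ⊓ s·f, st)`. -/
def sdMul {S E : Type*} [Monoid S] [SemilatticeInf E] (act : S → E → E)
    (p q : E × S) : E × S :=
  (p.1 ⊓ act p.2 q.1, p.2 * q.2)

/-- The unary operation of the semidirect product: `(e,s)⁺ = (e,λ)`. -/
def sdPlus {S E : Type*} [Monoid S] (p : E × S) : E × S := (p.1, 1)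

/-- If a monoid `S` acts on a meet-semilattice `E` with greatest
element `1` by endomorphisms, then `E ⋊ S` is an F-restriction semigroup with
`m((e,s)) = (1,s)`, whose maximum projection — its unique left identity — is
`(1, λ)`. -/
theorem stmt_6 {S E : Type*} [Monoid S] [SemilatticeInf E] [OrderTop E]
    (act : S → E → E)
    (hact1 : ∀ (s t : S) (e : E), act (s * t) e = act s (act t e))
    (hact2 : ∀ e : E, act 1 e = e)
    (hact3 : ∀ (s : S) (e f : E), act s (e ⊓ f) = act s e ⊓ act s f) :
    -- E ⋊ S is a restriction semigroup:
    (∀ p q r : E × S, sdMul act (sdMul act p q) r = sdMul act p (sdMul act q r)) ∧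
    (∀ p : E × S, sdMul act (sdPlus p) p = p) ∧
    (∀ p q : E × S, sdMul act (sdPlus p) (sdPlus q) = sdMul act (sdPlus q) (sdPlus p)) ∧
    (∀ p q : E × S, sdPlus (sdMul act (sdPlus p) q) = sdMul act (sdPlus p) (sdPlus q)) ∧
    (∀ p q : E × S, sdMul act p (sdPlus q) = sdMul act (sdPlus (sdMul act p q)) p) ∧
    -- it is F-restriction with m((e,s)) = (⊤,s):
    (∀ p : E × S, SigmaRel (sdMul act) sdPlus ((⊤ : E), p.2) p ∧
      ∀ q : E × S, SigmaRel (sdMul act) sdPlus q p →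
        NatLe (sdMul act) sdPlus q ((⊤ : E), p.2)) ∧
    -- (⊤,1) is the maximum projection:
    (IsProjection sdPlus ((⊤ : E), (1 : S)) ∧
      ∀ e : E × S, IsProjection sdPlus e →
        NatLe (sdMul act) sdPlus e ((⊤ : E), (1 : S))) ∧
    -- (⊤,1) is a left identity, and the unique one:
    (∀ p : E × S, sdMul act ((⊤ : E), (1 : S)) p = p) ∧
    (∀ l : E × S, (∀ p : E × S, sdMul act l p = p) → l = ((⊤ : E), (1 : S))) := by
  refine ⟨?_, ?_, ?_, ?_, ?_, ?_, ?_, ?_, ?_⟩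
  · intro p q r
    simp only [sdMul, hact1, hact3, inf_assoc, mul_assoc]
  · intro p
    simp [sdMul, sdPlus, hact2]
  · intro p q
    simp [sdMul, sdPlus, hact2, inf_comm]
  · intro p q
    simp [sdMul, sdPlus, hact2]
  · intro p q
    simp only [sdMul, sdPlus, hact2, mul_one, one_mul]
    rw [inf_assoc, inf_comm (act p.2 q.1) p.1, ← inf_assoc, inf_idem]
  · intro p
    constructor
    · exact ⟨(p.1, 1), ⟨p, rfl⟩, by simp [sdMul, sdPlus, hact2]⟩
    · rintro q ⟨e, ⟨a, rfl⟩, he⟩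
      have h2 : q.2 = p.2 := by
        have := congrArg Prod.snd he
        simpa [sdMul, sdPlus] using this
      show q = sdMul act (sdPlus q) (⊤, p.2)
      simp [sdMul, sdPlus, hact2, ← h2]
  · refine ⟨⟨(⊤, 1), rfl⟩, ?_⟩
    rintro e ⟨a, rfl⟩
    show sdPlus a = sdMul act (sdPlus (sdPlus a)) (⊤, 1)
    simp [sdMul, sdPlus, hact2]
  · intro p
    simp [sdMul, sdPlus, hact2]
  · intro l hl
    have h := hl (⊤, 1)
    have h2 : l.2 = 1 := by simpa [sdMul] using congrArg Prod.snd h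
    have h1 : l.1 ⊓ act l.2 ⊤ = ⊤ := by simpa [sdMul] using congrArg Prod.fst h
    have : l.1 = ⊤ := top_unique (le_of_eq h1.symm |>.trans inf_le_left)
    exact Prod.ext this h2
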